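/- Let F be a finite field of characteristic p with q elements, a ∈ F nonzero, and n ≥ 2 with p > n. Let X and Y be n×n matrices over F satisfying X² = a•X and Y² = a•Y. If trace(X) = trace(Y), then X and Y are similar over F (i.e. Y = P·X·P⁻¹ for some P ∈ GL(n,F)). That is, when p > n the trace alone separates the conjugation orbits of solutions. -/

import Mathlib

open Matrix Module

/-- canonical rank-r idempotent matrix -/
noncomputable def canM (F : Type*) [Field F] (n r : ℕ) : Matrix (Fin n) (Fin n) F :=
  Matrix.of (fun i j : Fin n => if i = j ∧ (j : ℕ) < r then (1 : F) else 0)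

lemma idem_canonical {F : Type*} [Field F] {n : ℕ} (E : Matrix (Fin n) (Fin n) F)
    (hE : E * E = E) :
    ∃ r, r ≤ n ∧ ∃ P : GL (Fin n) F,
      (P : Matrix (Fin n) (Fin n) F) * E *
        ((P⁻¹ : GL (Fin n) F) : Matrix (Fin n) (Fin n) F) = canM F n r := by
  classical
  set e : Basis (Fin n) F (Fin n → F) := Pi.basisFun F (Fin n) with he
  set f : (Fin n → F) →ₗ[F] (Fin n → F) := Matrix.toLin e e E with hf
  have hff : f ∘ₗ f = f := by
    rw [hf, ← Matrix.toLin_mul, hE]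
  obtain ⟨pr, hproj⟩ := (LinearMap.isProj_iff_isIdempotentElem f).2 hff
  have hc : IsCompl pr (LinearMap.ker f) := hproj.isCompl
  set r := finrank F pr with hr
  set k := finrank F (LinearMap.ker f) with hk
  have hrk : r + k = n := by
    have := Submodule.finrank_add_eq_of_isCompl hc
    simpa [Module.finrank_fin_fun] using this
  have hrn : r ≤ n := by omega
  set bp : Basis (Fin r) F pr := Module.finBasis F pr with hbp
  set bk : Basis (Fin k) F (LinearMap.ker f) := Module.finBasis F _ with hbk
  set b0 : Basis (Fin r ⊕ Fin k) F (Fin n → F) :=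
    (bp.prod bk).map (Submodule.prodEquivOfIsCompl _ _ hc) with hb0
  set ee : Fin r ⊕ Fin k ≃ Fin n := finSumFinEquiv.trans (finCongr hrk) with hee
  set b : Basis (Fin n) F (Fin n → F) := b0.reindex ee with hb
  have hb0l : ∀ i : Fin r, b0 (Sum.inl i) = (bp i : Fin n → F) := by
    intro i
    simp [hb0, Basis.map_apply, Basis.prod_apply, Submodule.coe_prodEquivOfIsCompl']
  have hb0r : ∀ i : Fin k, b0 (Sum.inr i) = (bk i : Fin n → F) := by
    intro i
    simp [hb0, Basis.map_apply, Basis.prod_apply, Submodule.coe_prodEquivOfIsCompl']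
  have key : ∀ j : Fin n, f (b j) = (if (j : ℕ) < r then (1 : F) else 0) • b j := by
    intro j
    obtain ⟨s, rfl⟩ := ee.surjective j
    have hbb : b (ee s) = b0 s := by simp [hb, Basis.reindex_apply]
    cases s with
    | inl i =>
        have hj : ((ee (Sum.inl i)) : ℕ) = (i : ℕ) := by
          simp [hee, finSumFinEquiv_apply_left]
        rw [hbb, hj, if_pos i.2, one_smul, hb0l]
        exact hproj.map_id _ (bp i).2
    | inr i =>
        have hj : ((ee (Sum.inr i)) : ℕ) = r + (i : ℕ) := by
          simp [hee, finSumFinEquiv_apply_right]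
        rw [hbb, hj, if_neg (by omega), zero_smul, hb0r]
        exact (bk i).2
  have hM : LinearMap.toMatrix b b f = canM F n r := by
    ext i j
    rw [LinearMap.toMatrix_apply, key j]
    by_cases hjr : (j : ℕ) < r
    · simp [canM, hjr, Basis.repr_self, Finsupp.single_apply, eq_comm]
    · simp [canM, hjr]
  refine ⟨r, hrn, ⟨b.toMatrix e, e.toMatrix b,
    Basis.toMatrix_mul_toMatrix_flip _ _, Basis.toMatrix_mul_toMatrix_flip _ _⟩, ?_⟩
  show b.toMatrix e * E * e.toMatrix b = canM F n r
  have hEf : E = LinearMap.toMatrix e e f := by rw [hf, LinearMap.toMatrix_toLin]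
  rw [hEf, basis_toMatrix_mul_linearMap_toMatrix_mul_basis_toMatrix, hM]

lemma trace_canM {F : Type*} [Field F] {n : ℕ} {m : ℕ} (hm : m ≤ n) :
    (canM F n m).trace = (m : F) := by
  classical
  have h1 : (canM F n m).trace = ∑ i : Fin n, if (i : ℕ) < m then (1 : F) else 0 := by
    simp [Matrix.trace, Matrix.diag, canM]
  rw [h1, Fin.sum_univ_eq_sum_range (fun j => if j < m then (1 : F) else 0)]
  rw [← Finset.sum_subset (Finset.range_subset_range.2 hm)
    (by intro x hx hx'; rw [Finset.mem_range] at hx'; rw [if_neg (by omega)])]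
  trans ∑ _j ∈ Finset.range m, (1 : F)
  · exact Finset.sum_congr rfl fun x hx => if_pos (Finset.mem_range.1 hx)
  · simp

theorem stmt_13 (F : Type*) [Field F] [Fintype F] (p : ℕ) [CharP F p] (a : F) (ha : a ≠ 0)
    (n : ℕ) (hn : 2 ≤ n) (hpn : n < p)
    (X Y : Matrix (Fin n) (Fin n) F) (hX : X * X = a • X) (hY : Y * Y = a • Y)
    (htr : X.trace = Y.trace) :
    ∃ P : GL (Fin n) F,
      (P : Matrix (Fin n) (Fin n) F) * X *
        ((P⁻¹ : GL (Fin n) F) : Matrix (Fin n) (Fin n) F) = Y := by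
  classical
  have hEX : (a⁻¹ • X) * (a⁻¹ • X) = a⁻¹ • X := by
    rw [Matrix.smul_mul, Matrix.mul_smul, hX, smul_smul, smul_smul]
    congr 1
    field_simp
  have hEY : (a⁻¹ • Y) * (a⁻¹ • Y) = a⁻¹ • Y := by
    rw [Matrix.smul_mul, Matrix.mul_smul, hY, smul_smul, smul_smul]
    congr 1
    field_simp
  obtain ⟨r, hrn, P, hP⟩ := idem_canonical _ hEX
  obtain ⟨s, hsn, Q, hQ⟩ := idem_canonical _ hEY
  have hXa : X = a • (a⁻¹ • X) := by rw [smul_smul, mul_inv_cancel₀ ha, one_smul]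
  have hYa : Y = a • (a⁻¹ • Y) := by rw [smul_smul, mul_inv_cancel₀ ha, one_smul]
  have hPX : (P : Matrix (Fin n) (Fin n) F) * X *
      ((P⁻¹ : GL (Fin n) F) : Matrix (Fin n) (Fin n) F) = a • canM F n r := by
    conv_lhs => rw [hXa]
    rw [Matrix.mul_smul, Matrix.smul_mul, hP]
  have hQY : (Q : Matrix (Fin n) (Fin n) F) * Y *
      ((Q⁻¹ : GL (Fin n) F) : Matrix (Fin n) (Fin n) F) = a • canM F n s := by
    conv_lhs => rw [hYa]
    rw [Matrix.mul_smul, Matrix.smul_mul, hQ]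
  -- trace invariance under conjugation
  have hinvP : ((P⁻¹ : GL (Fin n) F) : Matrix (Fin n) (Fin n) F) * P = 1 := by
    exact_mod_cast Units.inv_mul P
  have hinvQ : ((Q⁻¹ : GL (Fin n) F) : Matrix (Fin n) (Fin n) F) * Q = 1 := by
    exact_mod_cast Units.inv_mul Q
  have htrX : X.trace = a * r := by
    have := congrArg Matrix.trace hPX
    rwa [Matrix.trace_mul_cycle, hinvP, Matrix.one_mul,
      Matrix.trace_smul, trace_canM hrn, smul_eq_mul] at this
  have htrY : Y.trace = a * s := by
    have := congrArg Matrix.trace hQY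
    rwa [Matrix.trace_mul_cycle, hinvQ, Matrix.one_mul,
      Matrix.trace_smul, trace_canM hsn, smul_eq_mul] at this
  have hrs : r = s := by
    have hcast : (r : F) = (s : F) := by
      have := htr
      rw [htrX, htrY] at this
      exact mul_left_cancel₀ ha this
    exact CharP.natCast_injOn_Iio F p (by simp; omega) (by simp; omega) hcast
  subst hrs
  refine ⟨Q⁻¹ * P, ?_⟩
  have hco1 : ((Q⁻¹ * P : GL (Fin n) F) : Matrix (Fin n) (Fin n) F)
      = ((Q⁻¹ : GL (Fin n) F) : Matrix (Fin n) (Fin n) F) * P := rfl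
  have hco2 : (((Q⁻¹ * P)⁻¹ : GL (Fin n) F) : Matrix (Fin n) (Fin n) F)
      = ((P⁻¹ : GL (Fin n) F) : Matrix (Fin n) (Fin n) F) * Q := by
    rw [_root_.mul_inv_rev, inv_inv]; rfl
  rw [hco1, hco2]
  have hQinv : (Q : Matrix (Fin n) (Fin n) F) *
      ((Q⁻¹ : GL (Fin n) F) : Matrix (Fin n) (Fin n) F) = 1 := by
    exact_mod_cast Units.mul_inv Q
  calc ((Q⁻¹ : GL (Fin n) F) : Matrix (Fin n) (Fin n) F) * P * X *
        (((P⁻¹ : GL (Fin n) F) : Matrix (Fin n) (Fin n) F) * Q)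
      = ((Q⁻¹ : GL (Fin n) F) : Matrix (Fin n) (Fin n) F) *
        ((P : Matrix (Fin n) (Fin n) F) * X *
          ((P⁻¹ : GL (Fin n) F) : Matrix (Fin n) (Fin n) F)) * Q := by
        simp only [Matrix.mul_assoc]
    _ = ((Q⁻¹ : GL (Fin n) F) : Matrix (Fin n) (Fin n) F) *
        ((Q : Matrix (Fin n) (Fin n) F) * Y *
          ((Q⁻¹ : GL (Fin n) F) : Matrix (Fin n) (Fin n) F)) * Q := by rw [hPX, hQY]
    _ = Y := by
        rw [← Matrix.mul_assoc, ← Matrix.mul_assoc, hinvQ, Matrix.one_mul,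
          Matrix.mul_assoc, hinvQ, Matrix.mul_one]
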